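/- Let G be a group with presentation ⟨X | R⟩ in which every generator is an involution and every relator has even length. Let x ∈ X and set I = X ∖ {x}. For every w ∈ G with w ≠ e, one has w ∈ ᴵG if and only if every reduced expression of w begins with the generator x (i.e. every expression of w as a product of l(w) generators has first factor x). -/

import Mathlib

/-- The length of an element of a presented group whose generators are involutions:
the least `r` such that `w` is a product of `r` images of generators. -/
noncomputable def genLength {α : Type*} (R : Set (FreeGroup α)) (w : PresentedGroup R) : ℕ :=
  sInf {r : ℕ | ∃ L : List α, L.length = r ∧
    (L.map (PresentedGroup.of : α → PresentedGroup R)).prod = w}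


open PresentedGroup

section Aux

variable {α : Type*} [DecidableEq α] (R : Set (FreeGroup α))

/-- Every element of the presented group (with involutive generators) is a product of
generators. -/
lemma exists_expr (hinv : ∀ x : α, (PresentedGroup.of x : PresentedGroup R) ^ 2 = 1)
    (w : PresentedGroup R) :
    ∃ L : List α, (L.map (PresentedGroup.of : α → PresentedGroup R)).prod = w := by
  obtain ⟨g, rfl⟩ := QuotientGroup.mk'_surjective (Subgroup.normalClosure R) w
  induction g using FreeGroup.induction_on with
  | C1 => exact ⟨[], by simp; rfl⟩
  | of a => exact ⟨[a], by simp; rfl⟩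
  | inv_of a _ =>
    refine ⟨[a], ?_⟩
    rw [map_inv,
      show ((QuotientGroup.mk' (Subgroup.normalClosure R)) (FreeGroup.of a) : PresentedGroup R)
        = PresentedGroup.of a from rfl]
    erw [inv_eq_of_mul_eq_one_right (a := (PresentedGroup.of a : PresentedGroup R)) (b := PresentedGroup.of a) (by rw [← sq]; exact hinv a)]
    simp
  | mul a b ha hb =>
    obtain ⟨L1, h1⟩ := ha
    obtain ⟨L2, h2⟩ := hb
    exact ⟨L1 ++ L2, by rw [List.map_append, List.prod_append, h1, h2, map_mul]; rfl⟩

/-- The sign homomorphism. -/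
noncomputable def sgn (heven : ∀ r ∈ R, Even (FreeGroup.toWord r).length) :
    PresentedGroup R →* Multiplicative (ZMod 2) :=
  PresentedGroup.toGroup (f := fun _ => Multiplicative.ofAdd (1 : ZMod 2)) (by
    intro r hr
    rw [← FreeGroup.mk_toWord (x := r), FreeGroup.lift_mk]
    have hinv : (Multiplicative.ofAdd (1 : ZMod 2))⁻¹ = Multiplicative.ofAdd (1 : ZMod 2) := by
      decide
    have : ((FreeGroup.toWord r).map fun x =>
        cond x.2 (Multiplicative.ofAdd (1 : ZMod 2)) (Multiplicative.ofAdd (1 : ZMod 2))⁻¹)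
        = List.replicate (FreeGroup.toWord r).length (Multiplicative.ofAdd (1 : ZMod 2)) := by
      rw [hinv]
      simp only [List.eq_replicate_iff, List.length_map, List.mem_map]
      refine ⟨by simp, ?_⟩
      rintro _ ⟨b, _, rfl⟩; cases b.2 <;> rfl
    rw [this, List.prod_replicate]
    obtain ⟨k, hk⟩ := heven r hr
    rw [hk, ← two_mul, pow_mul,
      show (Multiplicative.ofAdd (1 : ZMod 2)) ^ 2 = 1 from by decide, one_pow])

lemma sgn_prod (heven : ∀ r ∈ R, Even (FreeGroup.toWord r).length) (L : List α) :
    sgn R heven ((L.map (PresentedGroup.of : α → PresentedGroup R)).prod)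
      = Multiplicative.ofAdd (L.length : ZMod 2) := by
  induction L with
  | nil => simp
  | cons a L ih =>
    simp only [List.map_cons, List.prod_cons, map_mul, ih, List.length_cons]
    rw [sgn, PresentedGroup.toGroup.of]
    rw [← ofAdd_add]
    congr 1
    push_cast
    ring

/-- Parity of length of expressions. -/
lemma parity_eq (heven : ∀ r ∈ R, Even (FreeGroup.toWord r).length)
    {L M : List α} (h : (L.map (PresentedGroup.of : α → PresentedGroup R)).prod
      = (M.map (PresentedGroup.of : α → PresentedGroup R)).prod) :
    (L.length : ZMod 2) = (M.length : ZMod 2) := by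
  have := congrArg (sgn R heven) h
  rw [sgn_prod R heven, sgn_prod R heven] at this
  exact Multiplicative.ofAdd.injective this

end Aux

theorem stmt_3 {α : Type*} [DecidableEq α] (R : Set (FreeGroup α))
    (hinv : ∀ x : α, (PresentedGroup.of x : PresentedGroup R) ^ 2 = 1)
    (heven : ∀ r ∈ R, Even (FreeGroup.toWord r).length)
    (x : α) (w : PresentedGroup R) (hw : w ≠ 1) :
    (∀ y ∈ (Set.univ \ {x} : Set α),
        genLength R w < genLength R (PresentedGroup.of y * w)) ↔
      ∀ L : List α, L.length = genLength R w →
        (L.map (PresentedGroup.of : α → PresentedGroup R)).prod = w →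
        L.head? = some x := by
  have hne : ∀ v : PresentedGroup R, {r : ℕ | ∃ L : List α, L.length = r ∧
      (L.map (PresentedGroup.of : α → PresentedGroup R)).prod = v}.Nonempty := by
    intro v
    obtain ⟨L, hL⟩ := exists_expr R hinv v
    exact ⟨L.length, L, rfl, hL⟩
  have hmem : ∀ v : PresentedGroup R, ∃ L : List α, L.length = genLength R v ∧
      (L.map (PresentedGroup.of : α → PresentedGroup R)).prod = v :=
    fun v => Nat.sInf_mem (hne v)
  have hle : ∀ (v : PresentedGroup R) (L : List α),
      (L.map (PresentedGroup.of : α → PresentedGroup R)).prod = v →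
      genLength R v ≤ L.length :=
    fun v L h => Nat.sInf_le ⟨L, rfl, h⟩
  constructor
  · intro h L hlen hprod
    cases L with
    | nil => exact absurd (by simpa using hprod.symm) hw
    | cons y L' =>
      suffices hyx : y = x by simp [hyx]
      by_contra hyx
      simp only [List.map_cons, List.prod_cons] at hprod
      have hyw : PresentedGroup.of y * w = (L'.map (PresentedGroup.of : α → PresentedGroup R)).prod := by
        rw [← hprod, ← mul_assoc, ← sq, hinv, one_mul]
      have h1 : genLength R (PresentedGroup.of y * w) ≤ L'.length := hle _ _ hyw.symm
      have h2 := h y ⟨trivial, hyx⟩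
      simp only [List.length_cons] at hlen
      omega
  · intro h y hy
    have hyx : y ≠ x := hy.2
    set v := PresentedGroup.of y * w with hv
    have hwv : w = PresentedGroup.of y * v := by
      rw [hv, ← mul_assoc, ← sq, hinv, one_mul]
    obtain ⟨M, hMlen, hMprod⟩ := hmem v
    obtain ⟨L, hLlen, hLprod⟩ := hmem w
    have hle1 : genLength R w ≤ M.length + 1 := by
      have := hle w (y :: M) (by simp [hMprod, ← hwv])
      simpa using this
    have hpar : (L.length : ZMod 2) = ((y :: M).length : ZMod 2) :=
      parity_eq R heven (by rw [hLprod]; simp [hMprod, ← hwv])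
    rcases lt_trichotomy (genLength R v) (genLength R w) with hlt | heq | hgt
    · exfalso
      have hred : (y :: M).length = genLength R w := by
        simp only [List.length_cons]
        omega
      have := h (y :: M) hred (by simp [hMprod, ← hwv])
      simp at this
      exact hyx this
    · exfalso
      have hnat : L.length = M.length := by omega
      rw [hnat, List.length_cons, Nat.cast_add, Nat.cast_one] at hpar
      have h01 : (0 : ZMod 2) = 1 :=
        add_left_cancel (a := (M.length : ZMod 2)) (b := 0) (c := 1)
          (by rw [add_zero]; exact hpar)
      exact absurd h01 (by decide)
    · exact hgt
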